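/- Choi's theorem: a linear map T : M_m → M_n is completely positive if and only if (T ⊗ Id)(u·u^t) is a positive semidefinite Hermitian matrix, where u = Σ_{i=1}^m e_i ⊗ e_i. -/

import Mathlib

open Matrix ComplexOrder

/-- The map `T ⊗ Id` applied to a matrix in `M_m ⊗ M_l`, defined entrywise. -/
noncomputable def tensorId {m n l : ℕ}
    (T : Matrix (Fin m) (Fin m) ℂ →ₗ[ℂ] Matrix (Fin n) (Fin n) ℂ)
    (B : Matrix (Fin m × Fin l) (Fin m × Fin l) ℂ) :
    Matrix (Fin n × Fin l) (Fin n × Fin l) ℂ :=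
  Matrix.of fun p q => T (Matrix.of fun a b => B (a, p.2) (b, q.2)) p.1 q.1

/-- The vector `u = ∑ e_i ⊗ e_i ∈ ℂ^m ⊗ ℂ^m`. -/
noncomputable def uVec (m : ℕ) : Fin m × Fin m → ℂ :=
  fun p => if p.1 = p.2 then 1 else 0

lemma sum4_swap {α β γ δ M : Type*} [AddCommMonoid M]
    [Fintype α] [Fintype β] [Fintype γ] [Fintype δ] (f : α → β → γ → δ → M) :
    ∑ a, ∑ b, ∑ c, ∑ d, f a b c d = ∑ c, ∑ d, ∑ a, ∑ b, f a b c d := by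
  calc ∑ a, ∑ b, ∑ c, ∑ d, f a b c d
      = ∑ a, ∑ c, ∑ b, ∑ d, f a b c d :=
        Finset.sum_congr rfl fun a _ => Finset.sum_comm
    _ = ∑ a, ∑ c, ∑ d, ∑ b, f a b c d :=
        Finset.sum_congr rfl fun a _ => Finset.sum_congr rfl fun c _ => Finset.sum_comm
    _ = ∑ c, ∑ a, ∑ d, ∑ b, f a b c d := Finset.sum_comm
    _ = ∑ c, ∑ d, ∑ a, ∑ b, f a b c d :=
        Finset.sum_congr rfl fun c _ => Finset.sum_comm

lemma tensorId_entry {m n l : ℕ}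
    (T : Matrix (Fin m) (Fin m) ℂ →ₗ[ℂ] Matrix (Fin n) (Fin n) ℂ)
    (B : Matrix (Fin m × Fin l) (Fin m × Fin l) ℂ) (i : Fin n) (p : Fin l)
    (j : Fin n) (q : Fin l) :
    tensorId T B (i, p) (j, q) =
      ∑ a : Fin m, ∑ b : Fin m, B (a, p) (b, q) * T (Matrix.single a b 1) i j := by
  have h : (Matrix.of fun a b => B (a, p) (b, q)) =
      ∑ a : Fin m, ∑ b : Fin m, B (a, p) (b, q) • Matrix.single a b (1 : ℂ) := by
    conv_lhs => rw [Matrix.matrix_eq_sum_single (Matrix.of fun a b => B (a, p) (b, q))]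
    simp [Matrix.smul_single]
  simp only [tensorId, Matrix.of_apply, h, map_sum, LinearMap.map_smul, Matrix.sum_apply,
    Matrix.smul_apply, smul_eq_mul]

lemma choi_entry {m n : ℕ}
    (T : Matrix (Fin m) (Fin m) ℂ →ₗ[ℂ] Matrix (Fin n) (Fin n) ℂ)
    (a b : Fin m) (i j : Fin n) :
    tensorId T (Matrix.vecMulVec (uVec m) (uVec m)) (i, a) (j, b) =
      T (Matrix.single a b 1) i j := by
  have h : (Matrix.of fun a' b' =>
      Matrix.vecMulVec (uVec m) (uVec m) (a', a) (b', b)) = Matrix.single a b (1 : ℂ) := by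
    ext a' b'
    by_cases h1 : a = a' <;> by_cases h2 : b = b' <;>
      simp [Matrix.vecMulVec_apply, uVec, Matrix.single, h1, h2, Ne.symm, eq_comm]
  simp only [tensorId, Matrix.of_apply, h]

open scoped MatrixOrder in
lemma psd_eq_star_mul {k : Type*} [Fintype k] [DecidableEq k] {M : Matrix k k ℂ}
    (h : M.PosSemidef) : ∃ B : Matrix k k ℂ, M = Bᴴ * B := by
  obtain ⟨X, hX, -, rfl⟩ := CFC.exists_sqrt_of_isSelfAdjoint_of_quasispectrumRestricts
    h.isHermitian (QuasispectrumRestricts.nnreal_of_nonneg h.nonneg)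
  exact ⟨X, by rw [← Matrix.star_eq_conjTranspose, hX.star_eq]⟩

/-- Choi's theorem: `T` is completely positive iff `(T ⊗ Id)(u uᵗ)` is
positive semidefinite. -/
theorem stmt7 {m n : ℕ} (T : Matrix (Fin m) (Fin m) ℂ →ₗ[ℂ] Matrix (Fin n) (Fin n) ℂ) :
    (∀ l : ℕ, ∀ B : Matrix (Fin m × Fin l) (Fin m × Fin l) ℂ,
        B.PosSemidef → (tensorId T B).PosSemidef) ↔
      (tensorId T (Matrix.vecMulVec (uVec m) (uVec m))).PosSemidef := by
  constructor
  · intro h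
    apply h m
    have : Matrix.vecMulVec (uVec m) (uVec m) =
        (Matrix.of (fun (_ : Unit) p => uVec m p))ᴴ * Matrix.of (fun (_ : Unit) p => uVec m p) := by
      ext p q
      simp [Matrix.mul_apply, Matrix.vecMulVec_apply, Matrix.conjTranspose_apply, uVec,
        mul_comm, apply_ite (starRingEnd ℂ)]
    rw [this]
    exact Matrix.posSemidef_conjTranspose_mul_self _
  · intro hC l B hB
    obtain ⟨A, hA⟩ := psd_eq_star_mul hC
    obtain ⟨P, hP⟩ := psd_eq_star_mul hB
    set Q : Matrix ((Fin n × Fin m) × (Fin m × Fin l)) (Fin n × Fin l) ℂ :=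
      Matrix.of fun kr ip => ∑ a : Fin m, A kr.1 (ip.1, a) * P kr.2 (a, ip.2) with hQ
    have key : tensorId T B = Qᴴ * Q := by
      ext ⟨i, p⟩ ⟨j, q⟩
      have hChoi : ∀ a b : Fin m, T (Matrix.single a b 1) i j =
          ∑ k : Fin n × Fin m, (starRingEnd ℂ) (A k (i, a)) * A k (j, b) := by
        intro a b
        rw [← choi_entry T a b i j, hA]
        simp [Matrix.mul_apply, Matrix.conjTranspose_apply, tensorId]
      have hBent : ∀ (a b : Fin m), B (a, p) (b, q) =
          ∑ r : Fin m × Fin l, (starRingEnd ℂ) (P r (a, p)) * P r (b, q) := by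
        intro a b
        rw [hP]
        simp [Matrix.mul_apply, Matrix.conjTranspose_apply]
      rw [tensorId_entry, Matrix.mul_apply]
      simp only [hChoi, hBent]
      have step1 : ∑ a : Fin m, ∑ b : Fin m,
          (∑ r : Fin m × Fin l, (starRingEnd ℂ) (P r (a, p)) * P r (b, q)) *
            (∑ k : Fin n × Fin m, (starRingEnd ℂ) (A k (i, a)) * A k (j, b)) =
          ∑ a : Fin m, ∑ b : Fin m, ∑ k : Fin n × Fin m, ∑ r : Fin m × Fin l,
            (starRingEnd ℂ) (A k (i, a)) * (starRingEnd ℂ) (P r (a, p)) *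
              (A k (j, b) * P r (b, q)) := by
        refine Finset.sum_congr rfl fun a _ => Finset.sum_congr rfl fun b _ => ?_
        rw [Finset.sum_mul_sum, Finset.sum_comm]
        exact Finset.sum_congr rfl fun k _ => Finset.sum_congr rfl fun r _ => by ring
      rw [step1, sum4_swap]
      conv_rhs => rw [Fintype.sum_prod_type]
      refine Finset.sum_congr rfl fun k _ => Finset.sum_congr rfl fun r _ => ?_
      rw [Matrix.conjTranspose_apply, hQ]
      simp only [Matrix.of_apply, star_sum, star_mul', Finset.sum_mul_sum, RCLike.star_def]
    rw [key]
    exact Matrix.posSemidef_conjTranspose_mul_self _
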